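/- For a uniform multinomial sample of size N with n bins, the expected discrete total variation F(n,N) equals 2·(n−1)·((n−2)/n)^N · Σ_{k_1+k_2≤N, k_1<k_2} [N! / (k_1!·k_2!·(N−k_1−k_2)!)] · (n−2)^{−(k_1+k_2)} · (k_2−k_1), for n ≥ 3. -/

import Mathlib

open Finset


theorem mult_factor (n N k1 k2 : ℕ) (i j : Fin n) (hij : i ≠ j) (x : Fin n → ℕ)
    (hsum : ∑ l, x l = N) (hx1 : x i = k1) (hx2 : x j = k2) :
    (Nat.multinomial univ x : ℝ) =
      (N.factorial : ℝ) / ((k1.factorial : ℝ) * (k2.factorial : ℝ) *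
        ((N - k1 - k2).factorial : ℝ)) *
      (Nat.multinomial ((univ.erase i).erase j) x : ℝ) := by
  set s := (univ.erase i).erase j with hs
  have hj' : j ∈ univ.erase i := by simp [hij.symm]
  have hsum_s : ∑ l ∈ s, x l = N - k1 - k2 := by
    have h1 : x i + ∑ l ∈ univ.erase i, x l = N := by
      rw [Finset.add_sum_erase _ _ (mem_univ i)]; exact hsum
    have h2 : x j + ∑ l ∈ s, x l = ∑ l ∈ univ.erase i, x l := by
      rw [hs, Finset.add_sum_erase _ _ hj']
    have h3 : ∑ l ∈ s, x l ≤ N := by omega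
    omega
  have spec1 := Nat.multinomial_spec (univ : Finset (Fin n)) x
  have spec2 := Nat.multinomial_spec s x
  rw [hsum] at spec1
  rw [hsum_s] at spec2
  have hprod : ∏ l, (x l).factorial =
      (x i).factorial * ((x j).factorial * ∏ l ∈ s, (x l).factorial) := by
    rw [← Finset.mul_prod_erase univ _ (mem_univ i), ← Finset.mul_prod_erase (univ.erase i) _ hj']
  have hfac : ∀ a : ℕ, ((a.factorial : ℝ)) ≠ 0 := fun a => Nat.cast_ne_zero.mpr a.factorial_ne_zero
  have e1 : ((k1.factorial : ℝ)) * ((k2.factorial : ℝ)) *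
      (∏ l ∈ s, ((x l).factorial : ℝ)) * (Nat.multinomial univ x : ℝ) = (N.factorial : ℝ) := by
    rw [← hx1, ← hx2]
    push_cast [← spec1, hprod]; ring
  have e2 : (∏ l ∈ s, ((x l).factorial : ℝ)) * (Nat.multinomial s x : ℝ) =
      ((N - k1 - k2).factorial : ℝ) := by
    push_cast [← spec2]; ring
  have hne : ((k1.factorial : ℝ) * (k2.factorial : ℝ) * ((N - k1 - k2).factorial : ℝ)) ≠ 0 := by
    positivity
  rw [div_mul_eq_mul_div, eq_div_iff hne]
  linear_combination (Nat.multinomial s x : ℝ) * e1 -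
    (Nat.multinomial univ x : ℝ) * (k1.factorial : ℝ) * (k2.factorial : ℝ) * e2

theorem fiber_bij (n N k1 k2 : ℕ) (i j : Fin n) (hij : i ≠ j) (hk : k1 + k2 ≤ N) :
    ∑ x ∈ (piAntidiag (univ : Finset (Fin n)) N).filter (fun x => (x i, x j) = (k1, k2)),
        (Nat.multinomial ((univ.erase i).erase j) x : ℝ) =
      ∑ y ∈ piAntidiag ((univ.erase i).erase j) (N - k1 - k2),
        (Nat.multinomial ((univ.erase i).erase j) y : ℝ) := by
  set s := (univ.erase i).erase j with hs
  have hmem : ∀ l, l ∈ s ↔ l ≠ j ∧ l ≠ i := by intro l; simp [hs]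
  have hi : i ∉ s := by simp [hmem]
  have hj : j ∉ s := by simp [hmem]
  refine Finset.sum_nbij' (fun x l => if l = i then 0 else if l = j then 0 else x l)
    (fun y l => if l = i then k1 else if l = j then k2 else y l) ?_ ?_ ?_ ?_ ?_
  · intro x hx
    simp only [mem_filter, mem_piAntidiag, Prod.mk.injEq] at hx
    obtain ⟨⟨hsum, -⟩, hxi, hxj⟩ := hx
    have hsum_s : ∑ l ∈ s, x l = N - k1 - k2 := by
      have h1 : x i + ∑ l ∈ univ.erase i, x l = N := by
        rw [Finset.add_sum_erase _ _ (mem_univ i)]; exact hsum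
      have h2 : x j + ∑ l ∈ s, x l = ∑ l ∈ univ.erase i, x l := by
        rw [hs, Finset.add_sum_erase _ _ (by simp [hij.symm])]
      omega
    rw [mem_piAntidiag]
    constructor
    · rw [← hsum_s]
      refine Finset.sum_congr rfl fun l hl => ?_
      rw [hmem] at hl
      simp [hl.1, hl.2]
    · intro l hl
      rw [hmem]
      by_contra hc
      push_neg at hc
      rcases eq_or_ne l i with h | hli
      · simp [h] at hl
      · have h : l = j := by tauto
        simp [h, hij.symm] at hl
  · intro y hy
    rw [mem_piAntidiag] at hy
    obtain ⟨hysum, hysupp⟩ := hy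
    simp only [mem_filter, mem_piAntidiag, Prod.mk.injEq]
    refine ⟨⟨?_, fun _ _ => mem_univ _⟩, by simp, by simp [hij.symm]⟩
    rw [← Finset.add_sum_erase _ _ (mem_univ i), ← Finset.add_sum_erase _ _
      (by simp [hij.symm] : j ∈ univ.erase i)]
    have h2 : ∑ l ∈ s, (if l = i then k1 else if l = j then k2 else y l) = N - k1 - k2 := by
      rw [← hysum]
      refine Finset.sum_congr rfl fun l hl => ?_
      rw [hmem] at hl
      simp [hl.1, hl.2]
    rw [← hs, h2]
    simp only [hij.symm, if_true, if_false, if_pos rfl, if_neg hij.symm]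
    omega
  · intro x hx
    simp only [mem_filter, mem_piAntidiag, Prod.mk.injEq] at hx
    funext l
    by_cases h1 : l = i
    · simp [h1, hx.2.1]
    by_cases h2 : l = j
    · simp [h1, h2, hij.symm, hx.2.2]
    · simp [h1, h2]
  · intro y hy
    rw [mem_piAntidiag] at hy
    funext l
    by_cases h1 : l = i
    · have hy0 : y l = 0 := by
        by_contra hc
        exact hi (h1 ▸ hy.2 l hc)
      rw [h1] at hy0
      simp [h1, hy0]
    by_cases h2 : l = j
    · have hy0 : y l = 0 := by
        by_contra hc
        exact hj (h2 ▸ hy.2 l hc)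
      rw [h2] at hy0
      simp [h1, h2, hy0]
    · simp [h1, h2]
  · intro x hx
    norm_cast
    exact Nat.multinomial_congr fun l hl => by
      rw [hmem] at hl
      simp [hl.1, hl.2]

theorem mult_sum_card {ι : Type*} [DecidableEq ι] (s : Finset ι) (M : ℕ) :
    ∑ y ∈ piAntidiag s M, (Nat.multinomial s y : ℝ) = (s.card : ℝ) ^ M := by
  have := Finset.sum_pow_eq_sum_piAntidiag s (fun _ => (1 : ℝ)) M
  simpa using this.symm

theorem marg (n N : ℕ) (i j : Fin n) (hij : i ≠ j) (g : ℕ → ℕ → ℝ) :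
    ∑ x ∈ piAntidiag (univ : Finset (Fin n)) N, (Nat.multinomial univ x : ℝ) * g (x i) (x j) =
      ∑ k ∈ (Finset.range (N + 1) ×ˢ Finset.range (N + 1)).filter (fun k => k.1 + k.2 ≤ N),
        (N.factorial : ℝ) / ((k.1.factorial : ℝ) * (k.2.factorial : ℝ) *
            ((N - k.1 - k.2).factorial : ℝ)) *
          (((univ.erase i).erase j).card : ℝ) ^ (N - k.1 - k.2) * g k.1 k.2 := by
  have hmaps : ∀ x ∈ piAntidiag (univ : Finset (Fin n)) N,
      (x i, x j) ∈ (Finset.range (N + 1) ×ˢ Finset.range (N + 1)).filter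
        (fun k => k.1 + k.2 ≤ N) := by
    intro x hx
    simp only [mem_piAntidiag] at hx
    simp only [mem_filter, mem_product, mem_range, Nat.lt_succ_iff]
    have hle : x i + x j ≤ N := by
      calc x i + x j = ∑ l ∈ {i, j}, x l := (Finset.sum_pair hij).symm
        _ ≤ ∑ l, x l := Finset.sum_le_sum_of_subset (subset_univ _)
        _ = N := hx.1
    exact ⟨⟨by omega, by omega⟩, hle⟩
  rw [← Finset.sum_fiberwise_of_maps_to hmaps
    (fun x => (Nat.multinomial univ x : ℝ) * g (x i) (x j))]
  refine Finset.sum_congr rfl fun k hk => ?_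
  simp only [mem_filter, mem_product, mem_range] at hk
  obtain ⟨⟨-, -⟩, hkle⟩ := hk
  have key : ∀ x ∈ (piAntidiag (univ : Finset (Fin n)) N).filter
      (fun x => (x i, x j) = k),
      (Nat.multinomial univ x : ℝ) * g (x i) (x j) =
      (N.factorial : ℝ) / ((k.1.factorial : ℝ) * (k.2.factorial : ℝ) *
          ((N - k.1 - k.2).factorial : ℝ)) *
        (Nat.multinomial ((univ.erase i).erase j) x : ℝ) * g k.1 k.2 := by
    intro x hx
    simp only [mem_filter, mem_piAntidiag, Prod.ext_iff] at hx
    obtain ⟨⟨hsum, -⟩, hxi, hxj⟩ := hx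
    rw [hxi, hxj, mult_factor n N k.1 k.2 i j hij x hsum hxi hxj]
  have hfib := fiber_bij n N k.1 k.2 i j hij hkle
  calc ∑ x ∈ (piAntidiag (univ : Finset (Fin n)) N).filter (fun x => (x i, x j) = k),
        (Nat.multinomial univ x : ℝ) * g (x i) (x j)
      = ∑ x ∈ (piAntidiag (univ : Finset (Fin n)) N).filter (fun x => (x i, x j) = k),
        (N.factorial : ℝ) / ((k.1.factorial : ℝ) * (k.2.factorial : ℝ) *
            ((N - k.1 - k.2).factorial : ℝ)) *
          (Nat.multinomial ((univ.erase i).erase j) x : ℝ) * g k.1 k.2 :=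
        Finset.sum_congr rfl key
    _ = (N.factorial : ℝ) / ((k.1.factorial : ℝ) * (k.2.factorial : ℝ) *
            ((N - k.1 - k.2).factorial : ℝ)) *
          (∑ x ∈ (piAntidiag (univ : Finset (Fin n)) N).filter (fun x => (x i, x j) = k),
            (Nat.multinomial ((univ.erase i).erase j) x : ℝ)) * g k.1 k.2 := by
        simp [Finset.sum_mul, Finset.mul_sum]
    _ = _ := by rw [show k = (k.1, k.2) from rfl] at hfib ⊢; rw [hfib, mult_sum_card]

theorem symm_double (N : ℕ) (A : ℕ → ℕ → ℝ) (hA : ∀ a b, A a b = A b a) :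
    ∑ k ∈ (Finset.range (N + 1) ×ˢ Finset.range (N + 1)).filter (fun k => k.1 + k.2 ≤ N),
        A k.1 k.2 * |(k.2 : ℝ) - (k.1 : ℝ)| =
      2 * ∑ k ∈ (Finset.range (N + 1) ×ˢ Finset.range (N + 1)).filter
          (fun k => k.1 + k.2 ≤ N ∧ k.1 < k.2),
        A k.1 k.2 * ((k.2 : ℝ) - (k.1 : ℝ)) := by
  set D := (Finset.range (N + 1) ×ˢ Finset.range (N + 1)).filter (fun k => k.1 + k.2 ≤ N)
    with hD
  have hDf : (Finset.range (N + 1) ×ˢ Finset.range (N + 1)).filter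
      (fun k => k.1 + k.2 ≤ N ∧ k.1 < k.2) = D.filter (fun k => k.1 < k.2) := by
    rw [hD, Finset.filter_filter]
  set f : ℕ × ℕ → ℝ := fun k => A k.1 k.2 * |(k.2 : ℝ) - (k.1 : ℝ)| with hf
  have split1 : ∑ k ∈ D.filter (fun k => k.1 < k.2), f k +
      ∑ k ∈ D.filter (fun k => ¬ k.1 < k.2), f k = ∑ k ∈ D, f k :=
    Finset.sum_filter_add_sum_filter_not D _ f
  have split2 : ∑ k ∈ (D.filter fun k => ¬ k.1 < k.2).filter (fun k => k.2 < k.1), f k +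
      ∑ k ∈ (D.filter fun k => ¬ k.1 < k.2).filter (fun k => ¬ k.2 < k.1), f k =
      ∑ k ∈ D.filter (fun k => ¬ k.1 < k.2), f k :=
    Finset.sum_filter_add_sum_filter_not _ _ f
  have hdiag : ∑ k ∈ (D.filter fun k => ¬ k.1 < k.2).filter (fun k => ¬ k.2 < k.1), f k = 0 := by
    refine Finset.sum_eq_zero fun k hk => ?_
    simp only [mem_filter] at hk
    have : k.1 = k.2 := by omega
    simp [hf, this]
  have hswap : ∑ k ∈ (D.filter fun k => ¬ k.1 < k.2).filter (fun k => k.2 < k.1), f k =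
      ∑ k ∈ D.filter (fun k => k.1 < k.2), f k := by
    refine Finset.sum_nbij' (fun k => (k.2, k.1)) (fun k => (k.2, k.1)) ?_ ?_ ?_ ?_ ?_
    · intro k hk
      simp only [mem_filter, mem_product, mem_range, hD] at hk ⊢
      omega
    · intro k hk
      simp only [mem_filter, mem_product, mem_range, hD] at hk ⊢
      omega
    · intro k _; rfl
    · intro k _; rfl
    · intro k _
      simp only [hf]
      rw [hA, abs_sub_comm]
  have habs : ∑ k ∈ D.filter (fun k => k.1 < k.2), f k =
      ∑ k ∈ D.filter (fun k => k.1 < k.2), A k.1 k.2 * ((k.2 : ℝ) - (k.1 : ℝ)) := by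
    refine Finset.sum_congr rfl fun k hk => ?_
    simp only [mem_filter] at hk
    have : (k.1 : ℝ) ≤ (k.2 : ℝ) := by exact_mod_cast hk.2.le
    simp only [hf]
    rw [abs_of_nonneg (by linarith)]
  rw [hDf, ← habs]
  have : ∑ k ∈ D, f k = ∑ k ∈ D, A k.1 k.2 * |(k.2 : ℝ) - (k.1 : ℝ)| := rfl
  rw [← this, ← split1, ← split2, hdiag, hswap]
  ring

theorem setEq (n N : ℕ) :
    (Fintype.piFinset fun _ : Fin n => Finset.range (N + 1)).filter
      (fun x => ∑ i, x i = N) = piAntidiag (univ : Finset (Fin n)) N := by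
  ext x
  simp only [mem_filter, Fintype.mem_piFinset, mem_range, mem_piAntidiag, mem_univ, imp_true_iff,
    and_true, Nat.lt_succ_iff]
  constructor
  · rintro ⟨-, h⟩; exact h
  · rintro h
    refine ⟨fun i => ?_, h⟩
    exact h ▸ Finset.single_le_sum (f := x) (fun _ _ => Nat.zero_le _) (mem_univ i)

/-- Expectation of `f` of the bin counts of a multinomial sample of size `N`
with bin probabilities `p : Fin n → ℝ`. -/
noncomputable def multExp (n N : ℕ) (p : Fin n → ℝ) (f : (Fin n → ℕ) → ℝ) : ℝ :=
  ∑ x ∈ (Fintype.piFinset fun _ : Fin n => Finset.range (N + 1)).filter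
      (fun x => ∑ i, x i = N),
    (Nat.multinomial Finset.univ x : ℝ) * (∏ i, p i ^ x i) * f x

/-- Discrete total variation of a histogram with `n + 1` bins. -/
noncomputable def dtv (n : ℕ) (x : Fin (n + 1) → ℕ) : ℝ :=
  ∑ i : Fin n, |(x i.succ : ℝ) - (x i.castSucc : ℝ)|

/-- Theorem 2: the exact expected discrete total variation of a uniform
multinomial histogram with `m + 3` bins (i.e. `n ≥ 3` bins). -/
theorem uniform_dtv_exact (m N : ℕ) :
    multExp (m + 3) N (fun _ => 1 / ((m : ℝ) + 3)) (dtv (m + 2)) =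
      2 * ((m : ℝ) + 2) * ((((m : ℝ) + 3) - 2) / ((m : ℝ) + 3)) ^ N *
        ∑ k ∈ (Finset.range (N + 1) ×ˢ Finset.range (N + 1)).filter
            (fun k => k.1 + k.2 ≤ N ∧ k.1 < k.2),
          (N.factorial : ℝ) /
              ((k.1.factorial : ℝ) * (k.2.factorial : ℝ) *
                ((N - k.1 - k.2).factorial : ℝ)) *
            (((m : ℝ) + 3) - 2) ^ (-((k.1 : ℤ) + (k.2 : ℤ))) *
            ((k.2 : ℝ) - (k.1 : ℝ)) := by
  have h1 : ((m : ℝ) + 1) ≠ 0 := by positivity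
  have h3 : ((m : ℝ) + 3) ≠ 0 := by positivity
  have e32 : ((m : ℝ) + 3) - 2 = (m : ℝ) + 1 := by ring
  rw [multExp, setEq]
  have hstep : ∀ x ∈ piAntidiag (univ : Finset (Fin (m + 3))) N,
      (Nat.multinomial Finset.univ x : ℝ) * (∏ i, (fun _ : Fin (m+3) => 1 / ((m : ℝ) + 3)) i ^ x i)
        * dtv (m + 2) x
      = (1 / ((m : ℝ) + 3)) ^ N * ∑ i : Fin (m + 2),
          (Nat.multinomial Finset.univ x : ℝ) * |(x i.succ : ℝ) - (x i.castSucc : ℝ)| := by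
    intro x hx
    rw [mem_piAntidiag] at hx
    simp only []
    rw [Finset.prod_pow_eq_pow_sum, hx.1, dtv, Finset.mul_sum, Finset.mul_sum]
    exact Finset.sum_congr rfl fun i _ => by ring
  rw [Finset.sum_congr rfl hstep, ← Finset.mul_sum, Finset.sum_comm]
  have hne : ∀ i : Fin (m + 2), (i.castSucc : Fin (m + 3)) ≠ i.succ :=
    fun i => (Fin.castSucc_lt_succ : i.castSucc < i.succ).ne
  have hcard : ∀ i : Fin (m + 2),
      ((((univ : Finset (Fin (m + 3))).erase i.castSucc).erase i.succ).card : ℝ)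
        = (m : ℝ) + 1 := by
    intro i
    rw [Finset.card_erase_of_mem (by simp [(hne i).symm]), Finset.card_erase_of_mem (mem_univ _),
      Finset.card_univ, Fintype.card_fin]
    push_cast
    ring
  have hmarg : ∀ i : Fin (m + 2),
      ∑ x ∈ piAntidiag (univ : Finset (Fin (m + 3))) N,
        (Nat.multinomial Finset.univ x : ℝ) * |(x i.succ : ℝ) - (x i.castSucc : ℝ)| =
      ∑ k ∈ (Finset.range (N + 1) ×ˢ Finset.range (N + 1)).filter (fun k => k.1 + k.2 ≤ N),
        (N.factorial : ℝ) / ((k.1.factorial : ℝ) * (k.2.factorial : ℝ) *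
            ((N - k.1 - k.2).factorial : ℝ)) *
          ((m : ℝ) + 1) ^ (N - k.1 - k.2) * |(k.2 : ℝ) - (k.1 : ℝ)| := by
    intro i
    have := marg (m + 3) N i.castSucc i.succ (hne i) (fun a b => |(b : ℝ) - (a : ℝ)|)
    rw [hcard i] at this
    exact this
  rw [Finset.sum_congr rfl fun i _ => hmarg i, Finset.sum_const, Finset.card_univ,
    Fintype.card_fin, nsmul_eq_mul]
  rw [symm_double N (fun a b => (N.factorial : ℝ) / ((a.factorial : ℝ) * (b.factorial : ℝ) *
      ((N - a - b).factorial : ℝ)) * ((m : ℝ) + 1) ^ (N - a - b))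
    (fun a b => by
      rw [show N - a - b = N - b - a from by omega]
      ring)]
  rw [e32, Finset.mul_sum, Finset.mul_sum, Finset.mul_sum, Finset.mul_sum]
  refine Finset.sum_congr rfl fun k hk => ?_
  simp only [mem_filter, mem_product, mem_range] at hk
  obtain ⟨-, hkle, -⟩ := hk
  have hzp : ((m : ℝ) + 1) ^ (-((k.1 : ℤ) + (k.2 : ℤ)))
      = ((m : ℝ) + 1) ^ (N - k.1 - k.2) / ((m : ℝ) + 1) ^ N := by
    rw [eq_div_iff (pow_ne_zero _ h1), ← zpow_natCast ((m : ℝ) + 1) (N - k.1 - k.2),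
      ← zpow_natCast ((m : ℝ) + 1) N, ← zpow_add₀ h1]
    congr 1
    omega
  rw [hzp]
  simp only [div_pow]
  have hp3 : ((m : ℝ) + 3) ^ N ≠ 0 := pow_ne_zero _ h3
  have hp1 : ((m : ℝ) + 1) ^ N ≠ 0 := pow_ne_zero _ h1
  field_simp
  push_cast
  ring
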